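/- Area asymptotics of the 'finger' sets: for R > 0, ζ ∈ (0, 2/R), let κ = Rζ/π, θ_r = 2π/(ζ r), ρ_r = R/sin(θ_r/2), G_r = (B(0,R) ⊕ [0, ru]) \ B(0,R) for a unit vector u, E_r = G_r ∩ B(0, ρ_r), F_r = G_r \ E_r. Then Leb₂(F_r) = 2R(1-κ)r + O(1) as r → ∞, i.e., the function r ↦ Leb₂(F_r) - 2R(1-κ)r is bounded. -/

import Mathlib

open MeasureTheory Pointwise Metric Set Filter Real

lemma finger_abs_coord_le_norm (x : EuclideanSpace ℝ (Fin 2)) (i : Fin 2) : |x i| ≤ ‖x‖ := by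
  rw [EuclideanSpace.norm_eq]
  rw [show |x i| = Real.sqrt (|x i| ^ 2) by rw [Real.sqrt_sq_eq_abs, abs_abs]]
  apply Real.sqrt_le_sqrt
  exact Finset.single_le_sum (f := fun j => |x j| ^ 2) (fun j _ => sq_nonneg _)
    (Finset.mem_univ i)

lemma finger_volume_box (a b c d : ℝ) :
    volume {x : EuclideanSpace ℝ (Fin 2) | x 0 ∈ Set.Icc a b ∧ x 1 ∈ Set.Icc c d}
      = ENNReal.ofReal (b - a) * ENNReal.ofReal (d - c) := by
  have hmeas : MeasurableSet (Set.univ.pi fun i : Fin 2 => Set.Icc (![a, c] i) (![b, d] i)) :=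
    MeasurableSet.univ_pi fun i => measurableSet_Icc
  have h := (EuclideanSpace.volume_preserving_symm_measurableEquiv_toLp (Fin 2)).measure_preimage
    hmeas.nullMeasurableSet
  have hset : (MeasurableEquiv.toLp 2 (Fin 2 → ℝ)).symm ⁻¹'
      (Set.univ.pi fun i : Fin 2 => Set.Icc (![a, c] i) (![b, d] i))
      = {x : EuclideanSpace ℝ (Fin 2) | x 0 ∈ Set.Icc a b ∧ x 1 ∈ Set.Icc c d} := by
    ext x
    simp [Set.mem_pi, Fin.forall_fin_two, Pi.le_def]
    tauto
  rw [hset] at h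
  rw [h, volume_pi_pi]
  simp [Fin.prod_univ_two, Real.volume_Icc]

set_option maxHeartbeats 1000000 in
/-- area asymptotics of the 'finger' sets. With `κ = Rζ/π`,
`ρ_r = R/sin(θ_r/2) = R/sin(π/(ζr))`, `G_r = (B(0,R) ⊕ [0, ru]) \ B(0,R)` and
`F_r = G_r \ B(0, ρ_r)`, one has `Leb₂(F_r) = 2R(1-κ)r + O(1)` as `r → ∞`. -/
theorem finger_area_asymptotics (R ζ : ℝ) (hR : 0 < R) (hζ : ζ ∈ Set.Ioo 0 (2/R))
    (u : EuclideanSpace ℝ (Fin 2)) (hu : ‖u‖ = 1) :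
    ∃ C : ℝ, ∀ᶠ r in Filter.atTop,
      |(volume (((Metric.closedBall (0 : EuclideanSpace ℝ (Fin 2)) R
              + segment ℝ 0 (r • u)) \ Metric.closedBall 0 R)
          \ Metric.closedBall 0 (R / Real.sin (Real.pi / (ζ * r))))).toReal
        - 2*R*(1 - R*ζ/Real.pi)*r| ≤ C := by
  obtain ⟨hζ0, hζ2⟩ := hζ
  have hπ := Real.pi_pos
  set κ := R * ζ / π with hκdef
  have hκpos : 0 < κ := by positivity
  have hκ1 : κ < 1 := by
    have h2 : R * ζ < 2 := by
      have := (lt_div_iff₀ hR).mp hζ2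
      nlinarith
    rw [hκdef, div_lt_one hπ]
    linarith [Real.pi_gt_three]
  -- orthonormal basis with b 0 = u
  have hcard : Module.finrank ℝ (EuclideanSpace ℝ (Fin 2)) = Fintype.card (Fin 2) := by simp
  have horth : Orthonormal ℝ (({0} : Set (Fin 2)).restrict (fun _ : Fin 2 => u)) := by
    rw [orthonormal_iff_ite]
    rintro ⟨i, hi⟩ ⟨j, hj⟩
    simp only [Set.mem_singleton_iff] at hi hj
    subst hi; subst hj
    rw [if_pos rfl]
    show (inner ℝ u u : ℝ) = 1
    rw [real_inner_self_eq_norm_sq, hu, one_pow]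
  obtain ⟨b, hb⟩ := horth.exists_orthonormalBasis_extension_of_card_eq hcard
  have hbu : b 0 = u := hb 0 rfl
  set T := b.repr with hT
  have hTu : T u = EuclideanSpace.single 0 1 := by rw [← hbu]; exact b.repr_self 0
  set e1 : EuclideanSpace ℝ (Fin 2) := EuclideanSpace.single 0 1 with he1
  refine ⟨8 * R ^ 2, ?_⟩
  have h1κ : 0 < 1 - κ := by linarith
  filter_upwards [eventually_ge_atTop (π / ζ), eventually_ge_atTop ((4 * R / 3) / (1 - κ)),
    eventually_ge_atTop 1] with r hr1 hr2 hr3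
  have hrpos : (0 : ℝ) < r := lt_of_lt_of_le one_pos hr3
  set x := π / (ζ * r) with hxdef
  have hx0 : 0 < x := by positivity
  have hx1 : x ≤ 1 := by
    rw [hxdef, div_le_one (by positivity)]
    calc π = ζ * (π / ζ) := by field_simp
    _ ≤ ζ * r := by nlinarith
  have hsin_pos : 0 < Real.sin x :=
    Real.sin_pos_of_pos_of_lt_pi hx0 (lt_of_le_of_lt hx1 (by linarith [Real.pi_gt_three]))
  have hsin_lt : Real.sin x < x := Real.sin_lt hx0
  have hsin_gt : x - x ^ 3 / 4 < Real.sin x := lt_of_le_of_lt (by have := pow_pos hx0 3; linarith) (Real.sin_gt_sub_cube hx0)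
  set ρ := R / Real.sin x with hρdef
  have hρpos : 0 < ρ := by positivity
  have hxκ : κ * r * x = R := by
    rw [hκdef, hxdef]; field_simp
  have hκr : κ * r = R / x := by rw [eq_div_iff hx0.ne']; exact hxκ
  have hρ1 : κ * r ≤ ρ := by
    rw [hκr, hρdef, div_le_div_iff₀ hx0 hsin_pos]
    nlinarith
  have hρ2 : ρ ≤ κ * r + R / 3 := by
    rw [hκr, hρdef, div_le_iff₀ hsin_pos]
    set t := R / x with htdef
    have htpos : 0 < t := by positivity
    have ht : t * x = R := by rw [htdef]; field_simp
    have ht3 : t * x ^ 3 = R * x ^ 2 := by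
      rw [show x ^ 3 = x * x ^ 2 by ring, ← mul_assoc, ht]
    have hmul : (t + R / 3) * (x - x ^ 3 / 4) ≤ (t + R / 3) * Real.sin x :=
      mul_le_mul_of_nonneg_left hsin_gt.le (by positivity)
    have hnn : 0 ≤ R * x * ((1 - x) * (x + 4)) :=
      mul_nonneg (mul_nonneg hR.le hx0.le)
        (mul_nonneg (sub_nonneg.2 hx1) (by linarith))
    have hnn' : 0 ≤ R * x / 3 - R * x ^ 2 / 4 - R * x ^ 3 / 12 := by
      have hq : R * x / 3 - R * x ^ 2 / 4 - R * x ^ 3 / 12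
          = R * x * ((1 - x) * (x + 4)) / 12 := by ring
      rw [hq]; linarith [hnn]
    have hexp : (t + R / 3) * (x - x ^ 3 / 4)
        = t * x - (t * x ^ 3) / 4 + (R * x / 3 - R * x ^ 3 / 12) := by ring
    have step : R ≤ (t + R / 3) * (x - x ^ 3 / 4) := by
      rw [hexp, ht, ht3]
      nlinarith [hnn', sq_nonneg x, mul_nonneg (mul_nonneg hR.le hx0.le) hx0.le]
    exact le_trans step hmul
  have hρR : R ≤ ρ := by
    rw [hρdef, le_div_iff₀ hsin_pos]
    nlinarith [Real.sin_le_one x]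
  have hrρ : ρ + R ≤ r := by
    have h4 : 4 * R / 3 ≤ r * (1 - κ) := by
      have := (div_le_iff₀ h1κ).mp hr2
      linarith
    nlinarith
  -- the sets
  set S₁ : Set (EuclideanSpace ℝ (Fin 2)) := closedBall 0 R + segment ℝ 0 (r • e1) with hS₁
  set F₁ : Set (EuclideanSpace ℝ (Fin 2)) := (S₁ \ closedBall 0 R) \ closedBall 0 ρ with hF₁
  set F : Set (EuclideanSpace ℝ (Fin 2)) :=
    ((closedBall 0 R + segment ℝ 0 (r • u)) \ closedBall 0 R) \ closedBall 0 ρ with hF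
  -- image under T
  have himg : T '' F = F₁ := by
    rw [hF, hF₁, Set.image_diff T.injective, Set.image_diff T.injective]
    have hball : ∀ s : ℝ, T '' closedBall 0 s = closedBall 0 s := by
      intro s
      rw [T.image_closedBall, map_zero]
    have hsum : T '' (closedBall 0 R + segment ℝ 0 (r • u)) = S₁ := by
      rw [Set.image_add, hball]
      congr 1
      have h := image_segment ℝ (T.toLinearEquiv.toLinearMap.toAffineMap) 0 (r • u)
      have heq : ⇑(T.toLinearEquiv.toLinearMap.toAffineMap) = ⇑T := rfl
      rw [heq] at h
      rw [h, map_zero, T.map_smul, hTu]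
    rw [hsum, hball, hball]
  have hsegc : IsCompact (segment ℝ (0 : EuclideanSpace ℝ (Fin 2)) (r • e1)) := by
    rw [segment_eq_image]
    exact isCompact_Icc.image (by fun_prop)
  have hF₁m : MeasurableSet F₁ :=
    (((isCompact_closedBall _ _).add hsegc).measurableSet.diff
      measurableSet_closedBall).diff measurableSet_closedBall
  have hvolF : volume F = volume F₁ := by
    have h := (b.measurePreserving_repr).measure_preimage hF₁m.nullMeasurableSet
    rw [← h]
    congr 1
    rw [← himg]
    exact (Set.preimage_image_eq F T.injective).symm
  -- lower bound
  have hsub1 : {y : EuclideanSpace ℝ (Fin 2) | y 0 ∈ Set.Icc (ρ + R) r ∧ y 1 ∈ Set.Icc (-R) R}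
      ⊆ F₁ := by
    rintro y ⟨⟨h0a, h0b⟩, h1a, h1b⟩
    have hynorm : ρ + R ≤ ‖y‖ :=
      le_trans (le_trans h0a (le_abs_self _)) (finger_abs_coord_le_norm y 0)
    have hdecomp : EuclideanSpace.single 1 (y 1) + (y 0) • e1 = y := by
      ext i
      fin_cases i <;>
        simp [he1, EuclideanSpace.single_apply]
    refine ⟨⟨?_, ?_⟩, ?_⟩
    · rw [hS₁, ← hdecomp]
      apply Set.add_mem_add
      · rw [mem_closedBall, dist_zero_right, EuclideanSpace.norm_single, Real.norm_eq_abs]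
        exact abs_le.mpr ⟨by linarith, h1b⟩
      · rw [segment_eq_image]
        refine ⟨y 0 / r, ⟨div_nonneg (by linarith) hrpos.le, (div_le_one hrpos).2 h0b⟩, ?_⟩
        simp only [smul_zero, zero_add, smul_smul]
        rw [div_mul_cancel₀ _ hrpos.ne']
    · rw [mem_closedBall, dist_zero_right, not_le]
      exact lt_of_lt_of_le (by linarith) hynorm
    · rw [mem_closedBall, dist_zero_right, not_le]
      exact lt_of_lt_of_le (by linarith) hynorm
  -- upper bound
  have hsub2 : F₁ ⊆ {y : EuclideanSpace ℝ (Fin 2) |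
      y 0 ∈ Set.Icc (ρ - 2*R) (r + R) ∧ y 1 ∈ Set.Icc (-R) R} := by
    rintro y ⟨⟨hyS, -⟩, hyρ⟩
    rw [hS₁, Set.mem_add] at hyS
    obtain ⟨a, ha, c, hc, hac⟩ := hyS
    rw [segment_eq_image] at hc
    obtain ⟨θ, ⟨hθ0, hθ1⟩, rfl⟩ := hc
    rw [mem_closedBall, dist_zero_right] at ha
    rw [mem_closedBall, dist_zero_right, not_le] at hyρ
    simp only [smul_zero, zero_add, smul_smul] at hac
    set s := θ * r with hs
    have hsnn : 0 ≤ s := mul_nonneg hθ0 hrpos.le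
    have hsr : s ≤ r := by nlinarith
    have ha0 := abs_le.1 (le_trans (finger_abs_coord_le_norm a 0) ha)
    have ha1 := abs_le.1 (le_trans (finger_abs_coord_le_norm a 1) ha)
    have hnormy : ‖y‖ ≤ R + s := by
      rw [← hac]
      calc ‖a + s • e1‖ ≤ ‖a‖ + ‖s • e1‖ := norm_add_le _ _
      _ ≤ R + s := by
        rw [norm_smul, he1, EuclideanSpace.norm_single, Real.norm_eq_abs, norm_one,
          abs_of_nonneg hsnn, mul_one]
        linarith
    have hy0 : y 0 = a 0 + s := by
      rw [← hac]; simp [he1, EuclideanSpace.single_apply]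
    have hy1 : y 1 = a 1 := by
      rw [← hac]; simp [he1, EuclideanSpace.single_apply]
    have hs_lb : ρ - R ≤ s := by linarith
    exact ⟨⟨by rw [hy0]; linarith, by rw [hy0]; linarith⟩,
      ⟨by rw [hy1]; linarith [ha1.1], by rw [hy1]; linarith [ha1.2]⟩⟩
  have hlow : volume {y : EuclideanSpace ℝ (Fin 2) |
      y 0 ∈ Set.Icc (ρ + R) r ∧ y 1 ∈ Set.Icc (-R) R} ≤ volume F₁ := measure_mono hsub1
  have hupp : volume F₁ ≤ volume {y : EuclideanSpace ℝ (Fin 2) |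
      y 0 ∈ Set.Icc (ρ - 2*R) (r + R) ∧ y 1 ∈ Set.Icc (-R) R} := measure_mono hsub2
  rw [finger_volume_box] at hlow hupp
  have hne : ENNReal.ofReal (r + R - (ρ - 2*R)) * ENNReal.ofReal (R - -R) ≠ ⊤ :=
    ENNReal.mul_ne_top ENNReal.ofReal_ne_top ENNReal.ofReal_ne_top
  have hFfin : volume F₁ ≠ ⊤ := (lt_of_le_of_lt hupp hne.lt_top).ne
  have h2 : (volume F₁).toReal ≤ (r + R - (ρ - 2*R)) * (R - -R) := by
    have h := ENNReal.toReal_mono hne hupp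
    rwa [ENNReal.toReal_mul, ENNReal.toReal_ofReal (by linarith),
      ENNReal.toReal_ofReal (by linarith)] at h
  have h1 : (r - (ρ + R)) * (R - -R) ≤ (volume F₁).toReal := by
    have h := ENNReal.toReal_mono hFfin hlow
    rwa [ENNReal.toReal_mul, ENNReal.toReal_ofReal (by linarith),
      ENNReal.toReal_ofReal (by linarith)] at h
  rw [hvolF, abs_le]
  constructor <;> nlinarith [h1, h2, hρ1, hρ2, hR, hrρ]
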